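/- Let X_1, …, X_n be mutually independent real-valued random variables and set W_k = X_1 + ⋯ + X_k for 1 ≤ k ≤ n. Then for every real number w and every h ≥ 0, P[max_{1≤k≤n} W_k > w] ≤ e^{−hw} · max_{1≤k≤n} E[e^{h W_k}]. -/

import Mathlib

open MeasureTheory ProbabilityTheory
open scoped ENNReal

/-- Key Lemma, finite maximum form.
`X 0, X 1, …` are the random variables `X_1, X_2, …` (so `X i` is `X_{i+1}`),
and `W k = X_1 + ⋯ + X_k = ∑_{j < k} X j`.  If `X_1, …, X_n` are mutually
independent, then for every real `w` and every `h ≥ 0`,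
`P[max_{1 ≤ k ≤ n} W k > w] ≤ e^{-h w} · max_{1 ≤ k ≤ n} E[e^{h W k}]`,
where the expectation is the Lebesgue integral of the nonnegative function,
with values in `(0, ∞]`. -/
theorem stmt0 {Ω : Type*} [MeasurableSpace Ω] (P : Measure Ω) [IsProbabilityMeasure P]
    (n : ℕ) (hn : 1 ≤ n) (X : ℕ → Ω → ℝ)
    (hmeas : ∀ i, Measurable (X i))
    (hindep : iIndepFun (fun i : Fin n => X i) P)
    (W : ℕ → Ω → ℝ) (hW : ∀ k ω, W k ω = ∑ j ∈ Finset.range k, X j ω)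
    (w h : ℝ) (hh : 0 ≤ h) :
    P {ω | ∃ k ∈ Finset.Icc 1 n, w < W k ω} ≤
      ENNReal.ofReal (Real.exp (-h * w)) *
        ⨆ k ∈ Finset.Icc 1 n, ∫⁻ ω, ENNReal.ofReal (Real.exp (h * W k ω)) ∂P := by
  classical
  -- notation
  set g : ℕ → Ω → ℝ≥0∞ := fun k ω => ENNReal.ofReal (Real.exp (h * W k ω)) with hgdef
  have hWmeas : ∀ k, Measurable (W k) := by
    intro k
    have : W k = fun ω => ∑ j ∈ Finset.range k, X j ω := funext fun ω => hW k ω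
    rw [this]
    exact Finset.measurable_sum _ fun j _ => hmeas j
  have hgmeas : ∀ k, Measurable (g k) := fun k =>
    ENNReal.measurable_ofReal.comp (Real.measurable_exp.comp ((hWmeas k).const_mul h))
  set A : ℕ → Set Ω := fun k => {ω | w < W k ω ∧ ∀ j ∈ Finset.Ico 1 k, W j ω ≤ w} with hAdef
  have hAmeas : ∀ k, MeasurableSet (A k) := by
    intro k
    have : A k = {ω | w < W k ω} ∩ ⋂ j ∈ Finset.Ico 1 k, {ω | W j ω ≤ w} := by
      ext ω; simp [hAdef]
    rw [this]
    exact (measurableSet_lt measurable_const (hWmeas k)).inter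
      (MeasurableSet.biInter (Finset.Ico 1 k).countable_toSet
        fun j _ => measurableSet_le (hWmeas j) measurable_const)
  -- the target set is contained in the disjoint union of the `A k`
  have hsub : {ω | ∃ k ∈ Finset.Icc 1 n, w < W k ω} ⊆ ⋃ k ∈ Finset.Icc 1 n, A k := by
    intro ω hω
    obtain ⟨k0, hk0, hwk0⟩ := hω
    have hex : ∃ k, (k ∈ Finset.Icc 1 n ∧ w < W k ω) := ⟨k0, hk0, hwk0⟩
    set m := Nat.find hex with hm
    obtain ⟨hmIcc, hwm⟩ := Nat.find_spec hex
    refine Set.mem_biUnion hmIcc ?_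
    refine ⟨hwm, fun j hj => ?_⟩
    obtain ⟨hj1, hjm⟩ := Finset.mem_Ico.mp hj
    by_contra hcon
    push_neg at hcon
    have hjIcc : j ∈ Finset.Icc 1 n := by
      rw [Finset.mem_Icc] at hmIcc ⊢
      exact ⟨hj1, le_trans (le_of_lt hjm) hmIcc.2⟩
    exact Nat.find_min hex hjm ⟨hjIcc, hcon⟩
  have hdisj : (↑(Finset.Icc 1 n) : Set ℕ).PairwiseDisjoint A := by
    have key2 : ∀ a b : ℕ, a < b → 1 ≤ a → Disjoint (A a) (A b) := by
      intro a b hab ha1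
      rw [Set.disjoint_left]
      intro ω hωa hωb
      exact absurd hωa.1 (not_lt.mpr (hωb.2 a (Finset.mem_Ico.mpr ⟨ha1, hab⟩)))
    intro a ha b hb hab
    simp only [Finset.coe_Icc, Set.mem_Icc] at ha hb
    rcases lt_or_gt_of_ne hab with hlt | hgt
    · exact key2 a b hlt ha.1
    · exact (key2 b a hgt hb.1).symm
  set c : ℝ≥0∞ := ⨆ k ∈ Finset.Icc 1 n, ∫⁻ ω, g k ω ∂P with hcdef
  set E : ℝ≥0∞ := ENNReal.ofReal (Real.exp (h * w)) with hEdef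
  have hgoal : P {ω | ∃ k ∈ Finset.Icc 1 n, w < W k ω} ≤
      ENNReal.ofReal (Real.exp (-h * w)) * c := by
    by_cases hcfin : c = ∞
    · rw [hcfin, ENNReal.mul_top (by positivity)]
      exact le_top
    -- main case
    set I : ℝ≥0∞ := ∫⁻ ω, g n ω ∂P with hIdef
    have hnmem : n ∈ Finset.Icc 1 n := Finset.mem_Icc.mpr ⟨hn, le_rfl⟩
    have hIle : I ≤ c := le_biSup (fun k => ∫⁻ ω, g k ω ∂P) hnmem
    have hItop : I ≠ ⊤ := fun hI => hcfin (top_le_iff.mp (hI ▸ hIle))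
    have hI0 : I ≠ 0 := by
      have hsupp : Function.support (g n) = Set.univ :=
        Set.eq_univ_of_forall fun ω => (ENNReal.ofReal_pos.mpr (Real.exp_pos _)).ne'
      refine ((lintegral_pos_iff_support (hgmeas n)).mpr ?_).ne'
      rw [hsupp]
      simp
    -- per-k key inequality
    have key : ∀ k ∈ Finset.Icc 1 n,
        E * P (A k) * I ≤ c * ∫⁻ ω, (A k).indicator (g n) ω ∂P := by
      intro k hk
      obtain ⟨hk1, hkn⟩ := Finset.mem_Icc.mp hk
      -- blocks of indices
      set S : Finset (Fin n) := Finset.univ.filter (fun i => (i : ℕ) < k) with hSdef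
      set T : Finset (Fin n) := Finset.univ.filter (fun i => k ≤ (i : ℕ)) with hTdef
      have hST : Disjoint S T := by
        rw [Finset.disjoint_left]
        intro i hiS hiT
        simp only [hSdef, hTdef, Finset.mem_filter, Finset.mem_univ, true_and] at hiS hiT
        omega
      -- the "future" factor
      set G : Ω → ℝ≥0∞ := fun ω => ENNReal.ofReal (Real.exp (h * ∑ j ∈ Finset.Ico k n, X j ω))
        with hGdef
      have hGmeas : Measurable G :=
        ENNReal.measurable_ofReal.comp (Real.measurable_exp.comp
          ((Finset.measurable_sum _ fun j _ => hmeas j).const_mul h))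
      have himg : T.image Fin.val = Finset.Ico k n := by
        ext j
        simp only [Finset.mem_image, Finset.mem_Ico, hTdef, Finset.mem_filter, Finset.mem_univ,
          true_and]
        constructor
        · rintro ⟨i, hi, rfl⟩; exact ⟨hi, i.2⟩
        · rintro ⟨hkj, hjn⟩; exact ⟨⟨j, hjn⟩, hkj, rfl⟩
      have hTsum : ∀ ω, ∑ i ∈ T, X (i : ℕ) ω = ∑ j ∈ Finset.Ico k n, X j ω := by
        intro ω
        rw [← himg, Finset.sum_image (fun x _ y _ hxy => Fin.val_injective hxy)]
      -- functions of the first block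
      set xfun : (S → ℝ) → ℕ → ℝ := fun v j =>
        if hj : j < k then v ⟨⟨j, lt_of_lt_of_le hj hkn⟩,
          Finset.mem_filter.mpr ⟨Finset.mem_univ _, hj⟩⟩ else 0 with hxdef
      set WS : (S → ℝ) → ℕ → ℝ := fun v m => ∑ j ∈ Finset.range m, xfun v j with hWSdef
      have hWSmeas : ∀ m, Measurable (fun v : S → ℝ => WS v m) := by
        intro m
        apply Finset.measurable_sum
        intro j _
        by_cases hj : j < k
        · simp only [hxdef, dif_pos hj]
          exact measurable_pi_apply _
        · simp only [hxdef, dif_neg hj]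
          exact measurable_const
      set B : Set (S → ℝ) := {v | w < WS v k ∧ ∀ j ∈ Finset.Ico 1 k, WS v j ≤ w} with hBdef
      have hBmeas : MeasurableSet B := by
        have : B = {v | w < WS v k} ∩ ⋂ j ∈ Finset.Ico 1 k, {v | WS v j ≤ w} := by
          ext v; simp [hBdef]
        rw [this]
        exact (measurableSet_lt measurable_const (hWSmeas k)).inter
          (MeasurableSet.biInter (Finset.Ico 1 k).countable_toSet
            fun j _ => measurableSet_le (hWSmeas j) measurable_const)
      set gS : (S → ℝ) → ℝ≥0∞ := fun v => ENNReal.ofReal (Real.exp (h * WS v k)) with hgSdef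
      have hgSmeas : Measurable gS :=
        ENNReal.measurable_ofReal.comp (Real.measurable_exp.comp ((hWSmeas k).const_mul h))
      set φ : (S → ℝ) → ℝ≥0∞ := fun v => B.indicator gS v with hφdef
      have hφmeas : Measurable φ := hgSmeas.indicator hBmeas
      set ψ : (T → ℝ) → ℝ≥0∞ := fun v =>
        ENNReal.ofReal (Real.exp (h * ∑ i : T, v i)) with hψdef
      have hψmeas : Measurable ψ :=
        ENNReal.measurable_ofReal.comp (Real.measurable_exp.comp
          ((Finset.measurable_sum _ fun i _ => measurable_pi_apply i).const_mul h))
      have hbase := hindep.indepFun_finset S T hST (fun i => hmeas i)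
      -- evaluation identities
      have hWSeq : ∀ ω, ∀ m ≤ k, WS (fun i : S => X (i : ℕ) ω) m = W m ω := by
        intro ω m hm
        rw [hW]
        refine Finset.sum_congr rfl fun j hj => ?_
        have hjk : j < k := lt_of_lt_of_le (Finset.mem_range.mp hj) hm
        simp only [hxdef, dif_pos hjk]
      have hφeq : (φ ∘ fun ω (i : S) => X (i : ℕ) ω) = (A k).indicator (g k) := by
        funext ω
        have hiff : ((fun i : S => X (i : ℕ) ω) ∈ B) ↔ ω ∈ A k := by
          simp only [hBdef, hAdef, Set.mem_setOf_eq, hWSeq ω k le_rfl]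
          refine and_congr Iff.rfl ?_
          constructor
          · intro h2 j hj
            have := h2 j hj
            rwa [hWSeq ω j (le_of_lt (Finset.mem_Ico.mp hj).2)] at this
          · intro h2 j hj
            rw [hWSeq ω j (le_of_lt (Finset.mem_Ico.mp hj).2)]
            exact h2 j hj
        simp only [Function.comp_apply, hφdef]
        by_cases hmem : ω ∈ A k
        · rw [Set.indicator_of_mem (hiff.mpr hmem), Set.indicator_of_mem hmem]
          simp only [hgSdef, hgdef, hWSeq ω k le_rfl]
        · rw [Set.indicator_of_notMem (fun hc => hmem (hiff.mp hc)),
            Set.indicator_of_notMem hmem]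
      have hφ2eq : (gS ∘ fun ω (i : S) => X (i : ℕ) ω) = g k := by
        funext ω
        simp only [Function.comp_apply, hgSdef, hgdef, hWSeq ω k le_rfl]
      have hψeq : (ψ ∘ fun ω (i : T) => X (i : ℕ) ω) = G := by
        funext ω
        simp only [Function.comp_apply, hψdef, hGdef]
        congr 2
        rw [Finset.sum_coe_sort T (fun i => X (i : ℕ) ω)]
        rw [hTsum ω]
      have hind1 : IndepFun ((A k).indicator (g k)) G P := by
        have := hbase.comp hφmeas hψmeas
        rwa [hφeq, hψeq] at this
      have hind2 : IndepFun (g k) G P := by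
        have := hbase.comp hgSmeas hψmeas
        rwa [hφ2eq, hψeq] at this
      -- splitting of g n
      have hgsplit : ∀ ω, g k ω * G ω = g n ω := by
        intro ω
        simp only [hgdef, hGdef]
        rw [← ENNReal.ofReal_mul (Real.exp_nonneg _), ← Real.exp_add]
        congr 2
        have hWn : W n ω = W k ω + ∑ j ∈ Finset.Ico k n, X j ω := by
          rw [hW, hW, Finset.sum_range_add_sum_Ico _ hkn]
        rw [hWn]; ring
      set q : ℝ≥0∞ := ∫⁻ ω, G ω ∂P with hqdef
      have hmul1 : ∫⁻ ω, (A k).indicator (g n) ω ∂P =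
          (∫⁻ ω, (A k).indicator (g k) ω ∂P) * q := by
        have heq : ∀ ω, (A k).indicator (g n) ω = (A k).indicator (g k) ω * G ω := by
          intro ω
          by_cases hmem : ω ∈ A k
          · rw [Set.indicator_of_mem hmem, Set.indicator_of_mem hmem, hgsplit]
          · rw [Set.indicator_of_notMem hmem, Set.indicator_of_notMem hmem, zero_mul]
        calc ∫⁻ ω, (A k).indicator (g n) ω ∂P
            = ∫⁻ ω, (A k).indicator (g k) ω * G ω ∂P := by
              exact lintegral_congr heq
          _ = (∫⁻ ω, (A k).indicator (g k) ω ∂P) * q :=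
              lintegral_mul_eq_lintegral_mul_lintegral_of_indepFun''
                ((hgmeas k).indicator (hAmeas k)).aemeasurable hGmeas.aemeasurable hind1
      have hmul2 : I = (∫⁻ ω, g k ω ∂P) * q := by
        calc I = ∫⁻ ω, g k ω * G ω ∂P := lintegral_congr fun ω => (hgsplit ω).symm
          _ = (∫⁻ ω, g k ω ∂P) * q :=
              lintegral_mul_eq_lintegral_mul_lintegral_of_indepFun''
                (hgmeas k).aemeasurable hGmeas.aemeasurable hind2
      have hkc : ∫⁻ ω, g k ω ∂P ≤ c := le_biSup (fun k => ∫⁻ ω, g k ω ∂P) hk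
      have hEP : E * P (A k) ≤ ∫⁻ ω, (A k).indicator (g k) ω ∂P := by
        rw [lintegral_indicator (hAmeas k)]
        calc E * P (A k) = ∫⁻ _ in A k, E ∂P := (setLIntegral_const (A k) E).symm
          _ ≤ ∫⁻ ω in A k, g k ω ∂P := by
              refine setLIntegral_mono (hgmeas k) fun ω hω => ?_
              exact ENNReal.ofReal_le_ofReal (Real.exp_le_exp.mpr
                (mul_le_mul_of_nonneg_left (le_of_lt hω.1) hh))
      calc E * P (A k) * I = (∫⁻ ω, g k ω ∂P) * ((E * P (A k)) * q) := by
            rw [hmul2]; ring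
        _ ≤ c * ((∫⁻ ω, (A k).indicator (g k) ω ∂P) * q) := by
            exact mul_le_mul hkc (mul_le_mul_left hEP q) zero_le zero_le
        _ = c * ∫⁻ ω, (A k).indicator (g n) ω ∂P := by rw [hmul1]
    -- sum over k
    have hsum : E * P {ω | ∃ k ∈ Finset.Icc 1 n, w < W k ω} * I ≤ c * I := by
      have h1 : P {ω | ∃ k ∈ Finset.Icc 1 n, w < W k ω} ≤ ∑ k ∈ Finset.Icc 1 n, P (A k) :=
        le_trans (measure_mono hsub) (measure_biUnion_finset_le _ _)
      calc E * P {ω | ∃ k ∈ Finset.Icc 1 n, w < W k ω} * I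
          ≤ E * (∑ k ∈ Finset.Icc 1 n, P (A k)) * I :=
            mul_le_mul_left (mul_le_mul_right h1 E) I
        _ = ∑ k ∈ Finset.Icc 1 n, E * P (A k) * I := by
            rw [Finset.mul_sum, Finset.sum_mul]
        _ ≤ ∑ k ∈ Finset.Icc 1 n, c * ∫⁻ ω, (A k).indicator (g n) ω ∂P :=
            Finset.sum_le_sum key
        _ = c * ∑ k ∈ Finset.Icc 1 n, ∫⁻ ω in A k, g n ω ∂P := by
            rw [← Finset.mul_sum]
            congr 1
            exact Finset.sum_congr rfl fun k _ => lintegral_indicator (hAmeas k) _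
        _ = c * ∫⁻ ω in ⋃ k ∈ Finset.Icc 1 n, A k, g n ω ∂P := by
            rw [lintegral_biUnion_finset hdisj (fun k _ => hAmeas k)]
        _ ≤ c * I := mul_le_mul_right (setLIntegral_le_lintegral _ _) c
    have hEPS : E * P {ω | ∃ k ∈ Finset.Icc 1 n, w < W k ω} ≤ c :=
      (ENNReal.mul_le_mul_iff_left hI0 hItop).mp hsum
    have hone : ENNReal.ofReal (Real.exp (-h * w)) * E = 1 := by
      rw [hEdef, ← ENNReal.ofReal_mul (Real.exp_nonneg _), ← Real.exp_add]
      norm_num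
    calc P {ω | ∃ k ∈ Finset.Icc 1 n, w < W k ω}
        = ENNReal.ofReal (Real.exp (-h * w)) * E * P {ω | ∃ k ∈ Finset.Icc 1 n, w < W k ω} := by
          rw [hone, one_mul]
      _ = ENNReal.ofReal (Real.exp (-h * w)) *
          (E * P {ω | ∃ k ∈ Finset.Icc 1 n, w < W k ω}) := by rw [mul_assoc]
      _ ≤ ENNReal.ofReal (Real.exp (-h * w)) * c := mul_le_mul_right hEPS _
  exact hgoal
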